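/- Let f ∈ ℝ[x₁,…,xₙ] (n ≥ 2) be a polynomial of degree d with leading form f_d (the homogeneous part of degree d). If f is convex on the complement of some ball {x : |x| > R}, then f_d is a convex function on ℝⁿ. -/

import Mathlib

section AuxStmt8

open Filter Set Polynomial Topology Finset

lemma aux_deriv_nonneg {g : ℝ → ℝ} {V : Set ℝ} (hV : IsOpen V) {s : ℝ} (hs : s ∈ V)
    (hg : DifferentiableAt ℝ g s) (hmono : MonotoneOn g V) : 0 ≤ deriv g s := by
  have h1 : Tendsto (slope g s) (𝓝[>] s) (𝓝 (deriv g s)) :=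
    (hasDerivAt_iff_tendsto_slope.mp hg.hasDerivAt).mono_left
      (nhdsWithin_mono _ (fun y hy => ne_of_gt hy))
  refine ge_of_tendsto h1 ?_
  filter_upwards [self_mem_nhdsWithin, mem_nhdsWithin_of_mem_nhds (hV.mem_nhds hs)] with y hy hyV
  rw [slope_def_field]
  exact div_nonneg (sub_nonneg.2 (hmono hs hyV (le_of_lt hy))) (sub_nonneg.2 (le_of_lt hy))

lemma aux_locconv (P : ℝ[X])
    (h : ∀ s ∈ Icc (0:ℝ) 1, ∃ V : Set ℝ, s ∈ V ∧ IsOpen V ∧ Convex ℝ V ∧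
      ConvexOn ℝ V fun u => P.eval u) :
    ConvexOn ℝ (Icc (0:ℝ) 1) fun u => P.eval u := by
  have hdiff : Differentiable ℝ fun u => P.eval u := P.differentiable
  have hd : (deriv fun u => P.eval u) = fun u => P.derivative.eval u :=
    funext fun u => P.deriv
  refine convexOn_of_deriv2_nonneg (convex_Icc 0 1) P.continuous.continuousOn
    hdiff.differentiableOn ?_ ?_
  · rw [hd]; exact P.derivative.differentiable.differentiableOn
  · intro x hx
    have hx' : x ∈ Icc (0:ℝ) 1 := interior_subset hx
    obtain ⟨V, hxV, hVo, hVc, hconv⟩ := h x hx'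
    have hmono : MonotoneOn (fun u => P.derivative.eval u) V := by
      rw [← hd]
      exact hconv.monotoneOn_deriv fun y _ => hdiff.differentiableAt
    have : deriv^[2] (fun u => P.eval u) x = deriv (fun u => P.derivative.eval u) x := by
      rw [show deriv^[2] (fun u => P.eval u) = deriv (deriv fun u => P.eval u) from rfl, hd]
    rw [this]
    exact aux_deriv_nonneg hVo hxV (P.derivative.differentiable.differentiableAt) hmono

lemma aux_hom_eval {n k : ℕ} {φ : MvPolynomial (Fin n) ℝ} (hφ : φ.IsHomogeneous k)
    (t : ℝ) (z : Fin n → ℝ) :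
    MvPolynomial.eval (t • z) φ = t ^ k * MvPolynomial.eval z φ := by
  rw [MvPolynomial.eval_eq', MvPolynomial.eval_eq', Finset.mul_sum]
  refine Finset.sum_congr rfl fun d hd => ?_
  have hdeg : ∑ i, d i = k := by
    have h1 : Finsupp.degree d = k := by
      rw [Finsupp.degree_eq_weight_one]
      exact hφ (MvPolynomial.mem_support_iff.mp hd)
    rw [← h1, Finsupp.degree]
    exact (Finset.sum_subset (Finset.subset_univ _)
      (fun i _ hi => Finsupp.notMem_support_iff.mp hi)).symm
  have : ∏ i, (t • z) i ^ d i = t ^ k * ∏ i, z i ^ d i := by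
    have : ∀ i : Fin n, (t • z) i ^ d i = t ^ d i * z i ^ d i := fun i => by
      simp [mul_pow]
    rw [Finset.prod_congr rfl fun i _ => this i, Finset.prod_mul_distrib,
      Finset.prod_pow_eq_pow_sum, hdeg]
  rw [this]; ring

lemma aux_eval_smul_eq (n : ℕ) (f : MvPolynomial (Fin n) ℝ) (t : ℝ) (z : Fin n → ℝ) :
    MvPolynomial.eval (t • z) f =
      ∑ k ∈ Finset.range (f.totalDegree + 1),
        t ^ k * MvPolynomial.eval z (MvPolynomial.homogeneousComponent k f) := by
  conv_lhs => rw [← MvPolynomial.sum_homogeneousComponent f]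
  rw [map_sum]
  exact Finset.sum_congr rfl fun k _ =>
    aux_hom_eval (MvPolynomial.homogeneousComponent_isHomogeneous k f) t z

lemma aux_tendsto (n : ℕ) (f : MvPolynomial (Fin n) ℝ) (z : Fin n → ℝ) :
    Tendsto (fun t : ℝ => MvPolynomial.eval (t • z) f / t ^ f.totalDegree) atTop
      (𝓝 (MvPolynomial.eval z (MvPolynomial.homogeneousComponent f.totalDegree f))) := by
  set d := f.totalDegree with hdd
  have key : ∀ k ∈ Finset.range (d + 1),
      Tendsto (fun t : ℝ => t ^ k * MvPolynomial.eval z (MvPolynomial.homogeneousComponent k f) / t ^ d)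
        atTop (𝓝 (if k = d then MvPolynomial.eval z (MvPolynomial.homogeneousComponent k f) else 0)) := by
    intro k hk
    have hkd : k ≤ d := Nat.lt_succ_iff.mp (Finset.mem_range.mp hk)
    rcases eq_or_lt_of_le hkd with rfl | hlt
    · simp only [if_pos rfl]
      have heq0 : (fun t : ℝ => t ^ d * MvPolynomial.eval z (MvPolynomial.homogeneousComponent d f) / t ^ d)
          =ᶠ[atTop] fun _ => MvPolynomial.eval z (MvPolynomial.homogeneousComponent d f) := by
        filter_upwards [eventually_gt_atTop (0:ℝ)] with t ht
        field_simp
      exact Tendsto.congr' heq0.symm tendsto_const_nhds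
    · simp only [if_neg (Nat.ne_of_lt hlt)]
      have heq : (fun t : ℝ => t ^ k * MvPolynomial.eval z (MvPolynomial.homogeneousComponent k f) / t ^ d)
          =ᶠ[atTop] fun t => MvPolynomial.eval z (MvPolynomial.homogeneousComponent k f) * (t ^ (d - k))⁻¹ := by
        filter_upwards [eventually_gt_atTop (0:ℝ)] with t ht
        rw [show d = (d - k) + k from (Nat.sub_add_cancel hkd).symm, pow_add]
        field_simp
        rw [Nat.add_sub_cancel]
      have h0 : Tendsto (fun t : ℝ => MvPolynomial.eval z (MvPolynomial.homogeneousComponent k f) * (t ^ (d - k))⁻¹)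
          atTop (𝓝 (MvPolynomial.eval z (MvPolynomial.homogeneousComponent k f) * 0)) := by
        exact Tendsto.const_mul _ ((tendsto_pow_atTop (Nat.sub_ne_zero_of_lt hlt)).inv_tendsto_atTop)
      rw [mul_zero] at h0
      exact Tendsto.congr' heq.symm h0
  have hsum := tendsto_finset_sum (Finset.range (d+1)) key
  rw [Finset.sum_ite_eq' (Finset.range (d+1)) d
    (fun k => MvPolynomial.eval z (MvPolynomial.homogeneousComponent k f))] at hsum
  simp only [Finset.mem_range, Nat.lt_succ_self, if_pos] at hsum
  refine Tendsto.congr' ?_ hsum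
  filter_upwards with t
  rw [aux_eval_smul_eq, Finset.sum_div]


lemma aux_good (n : ℕ) (f : MvPolynomial (Fin n) ℝ) (R : ℝ)
    (hconv : ∀ x : Fin n → ℝ, R < Real.sqrt (∑ i, x i ^ 2) →
      ∃ U : Set (Fin n → ℝ), x ∈ U ∧ IsOpen U ∧ Convex ℝ U ∧
        ConvexOn ℝ U (fun y => MvPolynomial.eval y f))
    (x y : Fin n → ℝ) (hseg : ∀ z ∈ segment ℝ x y, z ≠ 0)
    {μ ν : ℝ} (hμ : 0 ≤ μ) (hν : 0 ≤ ν) (hμν : μ + ν = 1) :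
    MvPolynomial.eval (μ • x + ν • y) (MvPolynomial.homogeneousComponent f.totalDegree f) ≤
      μ * MvPolynomial.eval x (MvPolynomial.homogeneousComponent f.totalDegree f) +
      ν * MvPolynomial.eval y (MvPolynomial.homogeneousComponent f.totalDegree f) := by
  set nrm : (Fin n → ℝ) → ℝ := fun z => Real.sqrt (∑ i, z i ^ 2) with hnrm
  have hnrmcont : Continuous nrm :=
    (continuous_finset_sum Finset.univ fun i _ => (continuous_apply i).pow 2).sqrt
  -- positivity of nrm on nonzero points
  have hnrmpos : ∀ z : Fin n → ℝ, z ≠ 0 → 0 < nrm z := by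
    intro z hz
    apply Real.sqrt_pos.mpr
    obtain ⟨j, hj⟩ := Function.ne_iff.mp hz
    exact Finset.sum_pos' (fun i _ => sq_nonneg _) ⟨j, Finset.mem_univ j, sq_pos_of_ne_zero hj⟩
  -- scaling of nrm
  have hnrmsmul : ∀ (t : ℝ), 0 ≤ t → ∀ z, nrm (t • z) = t * nrm z := by
    intro t ht z
    have : ∑ i, (t • z) i ^ 2 = t ^ 2 * ∑ i, z i ^ 2 := by
      rw [Finset.mul_sum]; exact Finset.sum_congr rfl fun i _ => by simp [mul_pow]
    rw [hnrm]
    simp only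
    rw [this, Real.sqrt_mul (sq_nonneg t), Real.sqrt_sq ht]
  -- min of nrm over the segment
  have hsegcompact : IsCompact (segment ℝ x y) := by
    rw [segment_eq_image]
    exact isCompact_Icc.image (by continuity)
  obtain ⟨z₀, hz₀mem, hz₀min'⟩ := hsegcompact.exists_isMinOn ⟨x, left_mem_segment ℝ x y⟩
    hnrmcont.continuousOn
  have hz₀min : ∀ z ∈ segment ℝ x y, nrm z₀ ≤ nrm z := fun z hz => hz₀min' hz
  set δ := nrm z₀ with hδ
  have hδpos : 0 < δ := hnrmpos z₀ (hseg z₀ hz₀mem)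
  -- the main eventual inequality
  have hineq : ∀ᶠ t : ℝ in atTop,
      MvPolynomial.eval (t • (μ • x + ν • y)) f / t ^ f.totalDegree ≤
        μ * (MvPolynomial.eval (t • x) f / t ^ f.totalDegree) +
        ν * (MvPolynomial.eval (t • y) f / t ^ f.totalDegree) := by
    filter_upwards [eventually_gt_atTop (max (R / δ) 0)] with t ht
    have ht0 : 0 < t := lt_of_le_of_lt (le_max_right _ _) ht
    have htR : R < t * δ := by
      rw [← div_lt_iff₀ hδpos]
      exact lt_of_le_of_lt (le_max_left _ _) ht
    set a := t • x with ha
    set b := t • y with hb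
    set P : ℝ[X] := MvPolynomial.aeval
      (fun i => Polynomial.C (a i) + Polynomial.C (b i - a i) * Polynomial.X) f with hP
    have hPeval : ∀ s : ℝ, P.eval s = MvPolynomial.eval (a + s • (b - a)) f := by
      intro s
      have h1 : P.eval s = (Polynomial.aeval s) P := by
        rw [Polynomial.coe_aeval_eq_eval]
      rw [h1, hP, MvPolynomial.comp_aeval_apply]
      have h2 : (fun i => (Polynomial.aeval s)
          (Polynomial.C (a i) + Polynomial.C (b i - a i) * Polynomial.X)) =
          (a + s • (b - a)) := by
        funext i
        simp [mul_comm]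
      rw [h2]
      rw [MvPolynomial.aeval_def]
      rfl
    -- local convexity along the segment
    have hloc : ∀ s ∈ Icc (0:ℝ) 1, ∃ V : Set ℝ, s ∈ V ∧ IsOpen V ∧ Convex ℝ V ∧
        ConvexOn ℝ V fun u => P.eval u := by
      intro s hs
      set w := x + s • (y - x) with hw
      have hwseg : w ∈ segment ℝ x y := by
        rw [segment_eq_image']
        exact ⟨s, hs, rfl⟩
      have hzs : a + s • (b - a) = t • w := by
        rw [ha, hb, hw]
        simp [smul_smul, smul_sub, smul_add, mul_comm]
      have hnrmz : R < nrm (a + s • (b - a)) := by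
        rw [hzs, hnrmsmul t ht0.le]
        calc R < t * δ := htR
        _ ≤ t * nrm w := by
          exact mul_le_mul_of_nonneg_left (hz₀min w hwseg) ht0.le
      obtain ⟨U, hUmem, hUopen, hUconv, hUcvx⟩ := hconv _ hnrmz
      set L : ℝ →ᵃ[ℝ] (Fin n → ℝ) := AffineMap.lineMap a b with hL
      have hLapp : ∀ u : ℝ, L u = a + u • (b - a) := by
        intro u
        rw [hL, AffineMap.lineMap_apply_module']
        abel
      refine ⟨L ⁻¹' U, ?_, ?_, hUconv.affine_preimage L, ?_⟩
      · show L s ∈ U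
        rw [hLapp]; exact hUmem
      · exact hUopen.preimage (AffineMap.lineMap_continuous)
      · have := hUcvx.comp_affineMap L
        exact this.congr fun u _ => by rw [Function.comp_apply, hLapp u, ← hPeval u]
    have hcvx := aux_locconv P hloc
    have h01 := hcvx.2 (show (0:ℝ) ∈ Icc (0:ℝ) 1 by constructor <;> norm_num)
      (show (1:ℝ) ∈ Icc (0:ℝ) 1 by constructor <;> norm_num) hμ hν hμν
    simp only [smul_eq_mul, mul_zero, mul_one, zero_add] at h01
    rw [hPeval ν, hPeval 0, hPeval 1] at h01
    have e0 : a + (0:ℝ) • (b - a) = a := by simp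
    have e1 : a + (1:ℝ) • (b - a) = b := by simp
    have eν : a + ν • (b - a) = t • (μ • x + ν • y) := by
      rw [ha, hb]
      have hμ' : μ = 1 - ν := by linarith
      rw [hμ']
      simp [smul_sub, smul_add, smul_smul, sub_smul, one_smul, mul_comm]
      module
    rw [e0, e1, eν] at h01
    have hpow : (0:ℝ) < t ^ f.totalDegree := pow_pos ht0 _
    have hring : μ * (MvPolynomial.eval a f / t ^ f.totalDegree) +
        ν * (MvPolynomial.eval b f / t ^ f.totalDegree) =
        (μ * MvPolynomial.eval a f + ν * MvPolynomial.eval b f) / t ^ f.totalDegree := by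
      ring
    show MvPolynomial.eval (t • (μ • x + ν • y)) f / t ^ f.totalDegree ≤
      μ * (MvPolynomial.eval a f / t ^ f.totalDegree) +
      ν * (MvPolynomial.eval b f / t ^ f.totalDegree)
    rw [hring]
    gcongr
  have hT1 := aux_tendsto n f (μ • x + ν • y)
  have hT2 := ((aux_tendsto n f x).const_mul μ).add ((aux_tendsto n f y).const_mul ν)
  exact le_of_tendsto_of_tendsto hT1 hT2 hineq


/-- If a polynomial `f` in `n ≥ 2` variables of degree `d` is convex at infinity
(locally convex on `{x : |x| > R}` for some `R`), then its leading form `f_d`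
is convex on `ℝⁿ`. -/
theorem stmt_8 (n : ℕ) (hn : 2 ≤ n) (f : MvPolynomial (Fin n) ℝ) (R : ℝ)
    (hconv : ∀ x : Fin n → ℝ, R < Real.sqrt (∑ i, x i ^ 2) →
      ∃ U : Set (Fin n → ℝ), x ∈ U ∧ IsOpen U ∧ Convex ℝ U ∧
        ConvexOn ℝ U (fun y => MvPolynomial.eval y f)) :
    ConvexOn ℝ Set.univ
      (fun y => MvPolynomial.eval y (MvPolynomial.homogeneousComponent f.totalDegree f)) := by
  set F := MvPolynomial.homogeneousComponent f.totalDegree f with hF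
  refine ⟨convex_univ, ?_⟩
  intro x _ y _ μ ν hμ hν hμν
  simp only [smul_eq_mul]
  by_cases hgood : ∀ z ∈ segment ℝ x y, z ≠ 0
  · exact aux_good n f R hconv x y hgood hμ hν hμν
  -- bad case : 0 ∈ segment x y
  push_neg at hgood
  obtain ⟨z0, hz0seg, hz0⟩ := hgood
  subst hz0
  -- x and y lie on a common line through the origin
  obtain ⟨u, hxu, hyu⟩ : ∃ u : Fin n → ℝ,
      x ∈ Submodule.span ℝ {u} ∧ y ∈ Submodule.span ℝ {u} := by
    obtain ⟨α, β, hα, hβ, hαβ, hsum⟩ := hz0seg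
    by_cases hβ0 : β = 0
    · have hα1 : α = 1 := by rw [hβ0] at hαβ; linarith
      have hx0 : x = 0 := by
        rw [hβ0, hα1] at hsum
        simpa using hsum
      exact ⟨y, by rw [hx0]; exact Submodule.zero_mem _, Submodule.mem_span_singleton_self y⟩
    · refine ⟨x, Submodule.mem_span_singleton_self x, ?_⟩
      have : y = (β⁻¹ * (-α)) • x := by
        have hβy : β • y = (-α) • x := by
          have := hsum
          rw [show α • x + β • y = 0 ↔ β • y = -(α • x) by constructor <;> intro h <;> linear_combination (norm := module) h] at this
          rw [this, neg_smul]
        rw [mul_smul, ← hβy, smul_smul, inv_mul_cancel₀ hβ0, one_smul]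
      exact Submodule.mem_span_singleton.mpr ⟨β⁻¹ * (-α), this.symm⟩
  -- find v outside the line
  have hspan_ne : Submodule.span ℝ ({u} : Set (Fin n → ℝ)) ≠ ⊤ := by
    intro htop
    have h1 : Module.finrank ℝ ↥(Submodule.span ℝ ({u} : Set (Fin n → ℝ))) ≤ 1 := by
      simpa using finrank_span_le_card ({u} : Set (Fin n → ℝ))
    rw [htop, finrank_top] at h1
    rw [Module.finrank_fintype_fun_eq_card, Fintype.card_fin] at h1
    omega
  obtain ⟨v, hv⟩ : ∃ v : Fin n → ℝ, v ∉ Submodule.span ℝ ({u} : Set (Fin n → ℝ)) := by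
    by_contra h
    push_neg at h
    exact hspan_ne (Submodule.eq_top_iff'.mpr h)
  -- perturbation sequence
  set c : ℕ → ℝ := fun k => 1 / (k + 1) with hc
  have hcpos : ∀ k, 0 < c k := fun k => by positivity
  have hcto : Tendsto c atTop (𝓝 0) := tendsto_one_div_add_atTop_nhds_zero_nat
  have hkey : ∀ k : ℕ,
      MvPolynomial.eval (μ • (x + c k • v) + ν • (y + c k • v)) F ≤
        μ * MvPolynomial.eval (x + c k • v) F + ν * MvPolynomial.eval (y + c k • v) F := by
    intro k
    apply aux_good n f R hconv _ _ _ hμ hν hμν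
    intro z hz hz0
    obtain ⟨α, β, hα, hβ, hαβ, hsum⟩ := hz
    rw [hz0] at hsum
    have h1 : α • x + β • y + ((α + β) * c k) • v = 0 := by
      linear_combination (norm := module) hsum
    rw [hαβ, one_mul] at h1
    have h1' : c k • v = -(α • x + β • y) := by
      linear_combination (norm := module) h1
    have h2 : v = -((c k)⁻¹ • (α • x + β • y)) := by
      rw [← smul_neg, ← h1', inv_smul_smul₀ (hcpos k).ne']
    apply hv
    rw [h2]
    exact Submodule.neg_mem _ (Submodule.smul_mem _ _ (Submodule.add_mem _
      (Submodule.smul_mem _ _ hxu) (Submodule.smul_mem _ _ hyu)))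
  -- pass to the limit
  have hgcont : Continuous fun z : Fin n → ℝ => MvPolynomial.eval z F :=
    MvPolynomial.continuous_eval _
  have hxk : Tendsto (fun k => x + c k • v) atTop (𝓝 x) := by
    have h := (tendsto_const_nhds (x := x) (f := atTop (α := ℕ))).add (hcto.smul_const v)
    simpa using h
  have hyk : Tendsto (fun k => y + c k • v) atTop (𝓝 y) := by
    have h := (tendsto_const_nhds (x := y) (f := atTop (α := ℕ))).add (hcto.smul_const v)
    simpa using h
  have hmk : Tendsto (fun k => μ • (x + c k • v) + ν • (y + c k • v)) atTop
      (𝓝 (μ • x + ν • y)) := (hxk.const_smul μ).add (hyk.const_smul ν)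
  refine le_of_tendsto_of_tendsto' (hgcont.continuousAt.tendsto.comp hmk) ?_ hkey
  exact ((hgcont.continuousAt.tendsto.comp hxk).const_mul μ).add
    ((hgcont.continuousAt.tendsto.comp hyk).const_mul ν)

end AuxStmt8
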